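/- Let G be a hypergraph on a finite set V and let ∼ be an equivalence relation on V such that ∼ ∈ E_⊂[G]. Then for all x, y ∈ V, the vertices π_∼(x) and π_∼(y) lie in the same connected component of the contracted hypergraph G/∼ if and only if x and y lie in the same connected component of G; in other words, the connected components of G/∼ are precisely the images under π_∼ of the connected components of G. -/
import Mathlib


/-- One step in a path of a hypergraph with edge set `E`: `x` and `y` belong to a common edge. -/
def hstep {α : Type*} (E : Set (Set α)) (x y : α) : Prop := ∃ e ∈ E, x ∈ e ∧ y ∈ e

/-- There is a path from `x` to `y` in the hypergraph with edge set `E`. -/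
def hreach {α : Type*} (E : Set (Set α)) : α → α → Prop := Relation.ReflTransGen (hstep E)

/-- The hypergraph with edge set `E` and vertex set `S` is connected. -/
def connOn {α : Type*} (E : Set (Set α)) (S : Set α) : Prop := ∀ x ∈ S, ∀ y ∈ S, hreach E x y

/-- Edge set of `G|_⊂I`. -/
def subEdges {α : Type*} (E : Set (Set α)) (I : Set α) : Set (Set α) := {e ∈ E | e ⊆ I}

/-- Edge set of `G|_∩I`. -/
def capEdges {α : Type*} (E : Set (Set α)) (I : Set α) : Set (Set α) := {f | ∃ e ∈ E, f = e ∩ I}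

/-- The class of `x` for the relation `r`. -/
def classOf {α : Type*} (r : α → α → Prop) (x : α) : Set α := {y | r x y}

/-- Edge set of `G|_⊂∼`: union over the classes `C` of `∼` of the edge sets of `G|_⊂C`. -/
def subRelEdges {α : Type*} (E : Set (Set α)) (r : α → α → Prop) : Set (Set α) :=
  {e | ∃ x, e ∈ E ∧ e ⊆ classOf r x}

/-- Edge set of `G|_∩∼`: union over the classes `C` of `∼` of the edge sets of `G|_∩C`. -/
def capRelEdges {α : Type*} (E : Set (Set α)) (r : α → α → Prop) : Set (Set α) :=
  {f | ∃ x, ∃ e ∈ E, f = e ∩ classOf r x}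

/-- `∼ ∈ E_⊂[G]`: every class of `r` induces a connected `⊂`-sub-hypergraph. -/
def esubCond {α : Type*} (E : Set (Set α)) (r : α → α → Prop) : Prop :=
  ∀ x, connOn (subEdges E (classOf r x)) (classOf r x)

/-- `∼ ∈ E_∩[G]`: every class of `r` induces a connected `∩`-sub-hypergraph. -/
def ecapCond {α : Type*} (E : Set (Set α)) (r : α → α → Prop) : Prop :=
  ∀ x, connOn (capEdges E (classOf r x)) (classOf r x)

/-- Edge set of the contracted hypergraph `G/∼`. -/
def quotEdges {α : Type*} (s : Setoid α) (E : Set (Set α)) : Set (Set (Quotient s)) :=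
  {f | ∃ e ∈ E, f = Quotient.mk s '' e}


lemma hreach_mono {α : Type*} {E F : Set (Set α)} (h : E ⊆ F) {x y : α}
    (hr : hreach E x y) : hreach F x y := by
  induction hr with
  | refl => exact Relation.ReflTransGen.refl
  | tail _ hstep ih =>
      obtain ⟨e, he, hx, hy⟩ := hstep
      exact ih.tail ⟨e, h he, hx, hy⟩

lemma hreach_of_rel {V : Type*} {E : Set (Set V)} {s : Setoid V}
    (hs : esubCond E s.r) {a b : V} (hab : s.r a b) : hreach E a b := by
  have h := hs a a (s.refl a) b hab
  exact hreach_mono (fun e he => he.1) h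

theorem stmt5 {V : Type*} [Fintype V] (E : Set (Set V))
    (hE0 : ∅ ∈ E) (hE1 : ∀ x : V, {x} ∈ E)
    (s : Setoid V)
    (hs : esubCond E s.r) :
    ∀ x y : V,
      hreach (quotEdges s E) (Quotient.mk s x) (Quotient.mk s y) ↔ hreach E x y := by
  intro x y
  constructor
  · intro h
    have key : ∀ q : Quotient s, hreach (quotEdges s E) (Quotient.mk s x) q →
        ∃ v : V, Quotient.mk s v = q ∧ hreach E x v := by
      intro q hq
      induction hq with
      | refl => exact ⟨x, rfl, Relation.ReflTransGen.refl⟩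
      | tail _ hstep ih =>
          obtain ⟨b, hb, hxb⟩ := ih
          obtain ⟨f, ⟨e, he, rfl⟩, hpf, hcf⟩ := hstep
          obtain ⟨u, hu, huq⟩ := hpf
          obtain ⟨v, hv, hvq⟩ := hcf
          have hbu : s.r b u := Quotient.exact (hb.trans huq.symm)
          refine ⟨v, hvq, ?_⟩
          exact (hxb.trans (hreach_of_rel hs hbu)).tail ⟨e, he, hu, hv⟩
    obtain ⟨v, hv, hxv⟩ := key _ h
    exact hxv.trans (hreach_of_rel hs (Quotient.exact hv))
  · intro h
    induction h with
    | refl => exact Relation.ReflTransGen.refl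
    | tail _ hstep ih =>
        obtain ⟨e, he, ha, hb⟩ := hstep
        exact ih.tail ⟨Quotient.mk s '' e, ⟨e, he, rfl⟩, ⟨_, ha, rfl⟩, ⟨_, hb, rfl⟩⟩
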